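/- Let R be a branching ε-bisimulation on a finite LMC M, and let R^b be the finest equivalence on the transformed LMC M_R containing R and relating s with s_C for all divergent classes C ∈ div_R and s ∈ C. Then R^b is a transitive ε-bisimulation on M_R. Conversely, if R^b is a transitive ε-bisimulation on M_R, then R is a branching ε-bisimulation on M. -/

import Mathlib

open scoped BigOperators

attribute [local instance] Classical.propDecidable

set_option linter.unusedSectionVars false
set_option linter.unusedVariables false
set_option maxHeartbeats 1000000


/-- Mass that a (sub)distribution `μ` assigns to a set `A`. -/
noncomputable def pmass {S : Type*} (μ : S → ℝ) (A : Set S) : ℝ := ∑' a : A, μ a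

/-- L1-distance between two functions `S → ℝ`. -/
noncomputable def l1dist {S : Type*} (μ ν : S → ℝ) : ℝ := ∑' s, |μ s - ν s|

/-- `μ : S → ℝ` is a probability distribution. -/
def IsDistr {S : Type*} (μ : S → ℝ) : Prop :=
  (∀ s, 0 ≤ μ s) ∧ (∀ s, μ s ≤ 1) ∧ HasSum μ 1

/-- Image of a set under a relation. -/
def relImg {S : Type*} (R : S → S → Prop) (A : Set S) : Set S := {t | ∃ s ∈ A, R s t}

/-- ε-bisimulation on a labeled Markov chain with transition function `P` and labeling `lab`. -/
def IsEpsBisim {S L : Type*} (P : S → S → ℝ) (lab : S → L) (ε : ℝ)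
    (R : S → S → Prop) : Prop :=
  Reflexive R ∧ Symmetric R ∧
    ∀ s t, R s t → lab s = lab t ∧
      ∀ A : Set S, pmass (P s) A ≤ pmass (P t) (relImg R A) + ε

/-- ε-APB (approximate probabilistic bisimulation with precision ε). -/
def IsEpsAPB {S L : Type*} (P : S → S → ℝ) (lab : S → L) (ε : ℝ)
    (R : S → S → Prop) : Prop :=
  Reflexive R ∧ Symmetric R ∧
    ∀ s t, R s t → lab s = lab t ∧
      ∀ A : Set S, relImg R A ⊆ A → |pmass (P s) A - pmass (P t) A| ≤ ε

/-- Weight of a finite path witnessing `B U A` starting at `s` and continuing along the list. -/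
noncomputable def untilWeight {S : Type*} (P : S → S → ℝ) (B A : Set S) :
    S → List S → ℝ
  | s, [] => if s ∈ A then 1 else 0
  | s, t :: rest =>
      if s ∈ A then 0 else if s ∈ B then P s t * untilWeight P B A t rest else 0

/-- `Pr_s(B U A)`: probability of reaching `A` from `s` via states in `B`. -/
noncomputable def untilProb {S : Type*} (P : S → S → ℝ) (B A : Set S) (s : S) : ℝ :=
  ∑' l : List S, untilWeight P B A s l

/-- `Pr_s(□C)`: probability of staying in `C` forever, `= 1 - Pr_s(C U Cᶜ)`. -/
noncomputable def boxProb {S : Type*} (P : S → S → ℝ) (C : Set S) (s : S) : ℝ :=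
  1 - untilProb P C Cᶜ s

/-- Weak ε-bisimulation. -/
def IsWeakEpsBisim {S L : Type*} (P : S → S → ℝ) (lab : S → L) (ε : ℝ)
    (R : S → S → Prop) : Prop :=
  Reflexive R ∧ Symmetric R ∧
    ∀ s t, R s t → lab s = lab t ∧
      ∀ A : Set S, untilProb P {u | lab u = lab s} A s ≤
        untilProb P {u | lab u = lab t} (relImg R A) t + ε

/-- Weak ε-bisimilarity of two states. -/
def WeakEpsBisimilar {S L : Type*} (P : S → S → ℝ) (lab : S → L) (ε : ℝ)
    (s t : S) : Prop :=
  ∃ R, IsWeakEpsBisim P lab ε R ∧ R s t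

/-- Up-to-(n,ε)-bisimilarity. -/
def upTo {S L : Type*} (P : S → S → ℝ) (lab : S → L) (ε : ℝ) :
    ℕ → S → S → Prop
  | 0, _, _ => True
  | n + 1, s, t => lab s = lab t ∧
      ∀ A : Set S,
        pmass (P s) A ≤ pmass (P t) (relImg (upTo P lab ε n) A) + ε ∧
        pmass (P t) A ≤ pmass (P s) (relImg (upTo P lab ε n) A) + ε

/-- Branching ε-bisimulation. -/
def IsBranchingEpsBisim {S L : Type*} (P : S → S → ℝ) (lab : S → L) (ε : ℝ)
    (R : S → S → Prop) : Prop :=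
  Equivalence R ∧
    ∀ s t, R s t → lab s = lab t ∧
      ∀ A : Set S, relImg R A ⊆ A →
        |untilProb P {u | R s u} A s - untilProb P {u | R t u} A t| ≤ ε

/-- Transitive ε-bisimulation (equivalently, an ε-APB which is an equivalence). -/
def IsTransEpsBisim {S L : Type*} (P : S → S → ℝ) (lab : S → L) (ε : ℝ)
    (R : S → S → Prop) : Prop :=
  Equivalence R ∧
    ∀ s t, R s t → lab s = lab t ∧
      ∀ A : Set S, relImg R A ⊆ A → |pmass (P s) A - pmass (P t) A| ≤ ε

/-- Exact probabilistic bisimulation. -/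
def IsExactBisim {S L : Type*} (P : S → S → ℝ) (lab : S → L)
    (R : S → S → Prop) : Prop :=
  Equivalence R ∧
    ∀ s t, R s t → lab s = lab t ∧
      ∀ c, pmass (P s) {u | R c u} = pmass (P t) {u | R c u}

/-- `Pr_s(◇^{≤k} G)`: probability of reaching `G` from `s` within `k` steps. -/
noncomputable def reachLe {S : Type*} (P : S → S → ℝ) (G : Set S) :
    ℕ → S → ℝ
  | 0, s => if s ∈ G then 1 else 0
  | k + 1, s => if s ∈ G then 1 else ∑' t, P s t * reachLe P G k t

/-- A divergent class: every state of the class of `s` stays inside the class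
with probability at least `1 - ε`. -/
def divClass {S : Type*} (P : S → S → ℝ) (ε : ℝ) (sd : Setoid S) (s : S) : Prop :=
  ∀ u, sd.r s u → 1 - ε ≤ boxProb P {v | sd.r s v} u

/-- Transition function of the transformed LMC `M_R`: probability mass that would
diverge inside a divergent class is redirected to a fresh divergence state. -/
noncomputable def MRtrans {S : Type*} (P : S → S → ℝ) (ε : ℝ) (sd : Setoid S) :
    S ⊕ Quotient sd → S ⊕ Quotient sd → ℝ
  | Sum.inl s, Sum.inl t =>
      if sd.r s t then 0 else untilProb P {v | sd.r s v} {t} s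
  | Sum.inl s, Sum.inr q =>
      if q = Quotient.mk sd s ∧ divClass P ε sd s then
        boxProb P {v | sd.r s v} s else 0
  | Sum.inr _, Sum.inl _ => 0
  | Sum.inr q, Sum.inr q' => if q = q' then 1 else 0

/-- Labeling of the transformed LMC `M_R`. -/
noncomputable def MRlab {S L : Type*} (lab : S → L) (sd : Setoid S) :
    S ⊕ Quotient sd → L
  | Sum.inl s => lab s
  | Sum.inr q => lab q.out

/-- The finest equivalence `R^b` on `M_R` containing `R` and relating each state of a
divergent class with its divergence state. -/
def Rb {S : Type*} (P : S → S → ℝ) (ε : ℝ) (sd : Setoid S) :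
    S ⊕ Quotient sd → S ⊕ Quotient sd → Prop
  | Sum.inl s, Sum.inl t => sd.r s t
  | Sum.inl s, Sum.inr q => q = Quotient.mk sd s ∧ divClass P ε sd s
  | Sum.inr q, Sum.inl t => q = Quotient.mk sd t ∧ divClass P ε sd t
  | Sum.inr q, Sum.inr q' => q = q'


section Basic
variable {S : Type*} [Fintype S] [Inhabited S] (P : S → S → ℝ) (B A : Set S)

@[simp] lemma untilWeight_nil (s : S) :
    untilWeight P B A s [] = if s ∈ A then 1 else 0 := rfl

@[simp] lemma untilWeight_cons (s t : S) (rest : List S) :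
    untilWeight P B A s (t :: rest)
      = if s ∈ A then 0 else if s ∈ B then P s t * untilWeight P B A t rest else 0 := rfl

lemma untilWeight_nonneg (hP : ∀ s, IsDistr (P s)) :
    ∀ (l : List S) (s : S), 0 ≤ untilWeight P B A s l
  | [], s => by rw [untilWeight_nil]; split_ifs <;> norm_num
  | t :: rest, s => by
      rw [untilWeight_cons]
      split_ifs <;> try norm_num
      exact mul_nonneg ((hP s).1 t) (untilWeight_nonneg hP rest t)

lemma list_eq_cons_of_ne_nil {l : List S} (h : l ≠ []) : l.headI :: l.tail = l := by
  cases l with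
  | nil => exact absurd rfl h
  | cons a r => rfl

lemma sum_P_eq_one (hP : ∀ s, IsDistr (P s)) (s : S) : ∑ t, P s t = 1 :=
  (hasSum_fintype (P s)).unique (hP s).2.2

lemma sum_untilWeight_le_one (hP : ∀ s, IsDistr (P s)) :
    ∀ (n : ℕ) (F : Finset (List S)), (∀ l ∈ F, l.length ≤ n) → ∀ s : S,
      ∑ l ∈ F, untilWeight P B A s l ≤ 1 := by
  intro n
  induction n with
  | zero =>
    intro F hF s
    have hsub : F ⊆ {([] : List S)} := by
      intro l hl
      have := hF l hl
      simp only [Nat.le_zero, List.length_eq_zero_iff] at this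
      simp [this]
    rcases Finset.subset_singleton_iff.mp hsub with h | h <;> subst h
    · simp
    · simp only [Finset.sum_singleton, untilWeight_nil]
      split_ifs <;> norm_num
  | succ n ih =>
    intro F hF s
    by_cases hsA : s ∈ A
    · calc ∑ l ∈ F, untilWeight P B A s l
          ≤ ∑ l ∈ F, (if l = [] then 1 else 0) := by
            apply Finset.sum_le_sum
            intro l _
            cases l with
            | nil => simp [hsA]
            | cons a r => simp [hsA]
        _ = if ([] : List S) ∈ F then 1 else 0 := by rw [Finset.sum_ite_eq' F ([] : List S) (fun _ => (1:ℝ))]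
        _ ≤ 1 := by split_ifs <;> norm_num
    · by_cases hsB : s ∈ B
      · have hnil : ∀ l ∈ F.filter (fun l => l = []), untilWeight P B A s l = 0 := by
          intro l hl
          rw [Finset.mem_filter] at hl
          rw [hl.2]
          simp [hsA]
        have hsplit := Finset.sum_filter_add_sum_filter_not F (fun l => l = [])
          (untilWeight P B A s)
        rw [← hsplit, Finset.sum_eq_zero hnil, zero_add]
        set F' := F.filter (fun l => ¬ l = []) with hF'
        have hfib := Finset.sum_fiberwise_of_maps_to
          (s := F') (t := (Finset.univ : Finset S)) (g := List.headI)
          (fun l _ => Finset.mem_univ _) (untilWeight P B A s)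
        rw [← hfib]
        calc ∑ t : S, ∑ l ∈ F'.filter (fun l => l.headI = t), untilWeight P B A s l
            ≤ ∑ t : S, P s t := by
              apply Finset.sum_le_sum
              intro t _
              set G := F'.filter (fun l => l.headI = t) with hG
              have hcons : ∀ l ∈ G, untilWeight P B A s l = P s t * untilWeight P B A t l.tail := by
                intro l hl
                rw [hG, Finset.mem_filter, hF', Finset.mem_filter] at hl
                obtain ⟨⟨_, hne⟩, hhd⟩ := hl
                have hl' : t :: l.tail = l := by rw [← hhd]; exact list_eq_cons_of_ne_nil hne
                conv_lhs => rw [← hl']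
                rw [untilWeight_cons, if_neg hsA, if_pos hsB]
              rw [Finset.sum_congr rfl hcons, ← Finset.mul_sum]
              have htail : ∑ l ∈ G, untilWeight P B A t l.tail
                  = ∑ r ∈ G.image List.tail, untilWeight P B A t r := by
                rw [Finset.sum_image]
                intro x hx y hy hxy
                rw [Finset.mem_coe, Finset.mem_filter, hF', Finset.mem_filter] at hx hy
                have hx' := list_eq_cons_of_ne_nil hx.1.2
                have hy' := list_eq_cons_of_ne_nil hy.1.2
                rw [← hx', ← hy', hx.2, hy.2, hxy]
              have hlen : ∀ r ∈ G.image List.tail, r.length ≤ n := by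
                intro r hr
                rw [Finset.mem_image] at hr
                obtain ⟨l, hl, rfl⟩ := hr
                rw [hG, Finset.mem_filter, hF', Finset.mem_filter] at hl
                have := hF l hl.1.1
                have hne := hl.1.2
                cases l with
                | nil => exact absurd rfl hne
                | cons a r => simpa using Nat.lt_succ_iff.mp (Nat.lt_of_lt_of_le (Nat.lt_succ_self _) this)
              calc P s t * ∑ l ∈ G, untilWeight P B A t l.tail
                  = P s t * ∑ r ∈ G.image List.tail, untilWeight P B A t r := by rw [htail]
                _ ≤ P s t * 1 := by
                    apply mul_le_mul_of_nonneg_left _ ((hP s).1 t)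
                    exact ih _ hlen t
                _ = P s t := mul_one _
          _ = 1 := sum_P_eq_one P hP s
      · have : ∀ l ∈ F, untilWeight P B A s l = 0 := by
          intro l _
          cases l with
          | nil => simp [hsA]
          | cons a r => simp [hsA, hsB]
        rw [Finset.sum_eq_zero this]; norm_num

lemma summable_untilWeight (hP : ∀ s, IsDistr (P s)) (s : S) :
    Summable (untilWeight P B A s) :=
  summable_of_sum_le (fun l => untilWeight_nonneg P B A hP l s)
    (fun F => sum_untilWeight_le_one P B A hP (F.sup List.length) F
      (fun l hl => Finset.le_sup hl) s)

lemma untilProb_nonneg (hP : ∀ s, IsDistr (P s)) (s : S) : 0 ≤ untilProb P B A s :=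
  tsum_nonneg (fun l => untilWeight_nonneg P B A hP l s)

lemma untilProb_le_one (hP : ∀ s, IsDistr (P s)) (s : S) : untilProb P B A s ≤ 1 :=
  Summable.tsum_le_of_sum_le (summable_untilWeight P B A hP s)
    (fun F => sum_untilWeight_le_one P B A hP (F.sup List.length) F
      (fun l hl => Finset.le_sup hl) s)

lemma untilProb_of_mem (s : S) (hs : s ∈ A) : untilProb P B A s = 1 := by
  unfold untilProb
  rw [tsum_eq_single ([] : List S)]
  · simp [hs]
  · intro l hl
    cases l with
    | nil => exact absurd rfl hl
    | cons a r => simp [hs]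

lemma untilWeight_split (T : Finset S) (hT : ∀ t ∈ T, t ∉ B) :
    ∀ (l : List S) (s : S),
      untilWeight P B (↑T : Set S) s l = ∑ t ∈ T, untilWeight P B {t} s l
  | [], s => by
      simp only [untilWeight_nil, Set.mem_singleton_iff, Finset.mem_coe]
      rw [Finset.sum_ite_eq T s (fun _ => (1:ℝ))]
  | t :: rest, s => by
      by_cases hsT : s ∈ (↑T : Set S)
      · rw [untilWeight_cons, if_pos hsT]
        symm
        apply Finset.sum_eq_zero
        intro t' ht'
        rw [untilWeight_cons]
        by_cases h : s = t'
        · rw [if_pos (by simp [h])]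
        · rw [if_neg (by simp [h]), if_neg (hT s (Finset.mem_coe.mp hsT))]
      · rw [untilWeight_cons, if_neg hsT]
        have hterm : ∀ t' ∈ T, untilWeight P B {t'} s (t :: rest)
            = if s ∈ B then P s t * untilWeight P B {t'} t rest else 0 := by
          intro t' ht'
          rw [untilWeight_cons, if_neg (by
            simp only [Set.mem_singleton_iff]
            intro h; exact hsT (by simp [h, ht']))]
        rw [Finset.sum_congr rfl hterm]
        by_cases hsB : s ∈ B
        · simp only [if_pos hsB]
          rw [← Finset.mul_sum, ← untilWeight_split T hT rest t]
        · simp [hsB]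

lemma untilProb_finset (hP : ∀ s, IsDistr (P s)) (T : Finset S) (hT : ∀ t ∈ T, t ∉ B) (s : S) :
    untilProb P B (↑T : Set S) s = ∑ t ∈ T, untilProb P B {t} s := by
  unfold untilProb
  rw [tsum_congr (fun l => untilWeight_split P B T hT l s)]
  exact Summable.tsum_finsetSum (fun t _ => summable_untilWeight P B {t} hP s)

lemma untilProb_eq_sum (hP : ∀ s, IsDistr (P s)) (A : Set S) (hA : ∀ t ∈ A, t ∉ B) (s : S) :
    untilProb P B A s = ∑ t ∈ (Set.toFinite A).toFinset, untilProb P B {t} s := by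
  have h1 : A = ↑(Set.toFinite A).toFinset := by rw [Set.Finite.coe_toFinset]
  conv_lhs => rw [h1]
  exact untilProb_finset P B hP _ (fun t ht => hA t (by simpa using ht)) s

lemma untilProb_mono (hP : ∀ s, IsDistr (P s)) (A1 A2 : Set S) (h12 : A1 ⊆ A2)
    (h2 : ∀ t ∈ A2, t ∉ B) (s : S) :
    untilProb P B A1 s ≤ untilProb P B A2 s := by
  rw [untilProb_eq_sum P B hP A1 (fun t ht => h2 t (h12 ht)) s,
      untilProb_eq_sum P B hP A2 h2 s]
  apply Finset.sum_le_sum_of_subset_of_nonneg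
  · intro t ht
    simp only [Set.Finite.mem_toFinset] at *
    exact h12 ht
  · intro t _ _
    exact untilProb_nonneg P B {t} hP s

lemma untilProb_union (hP : ∀ s, IsDistr (P s)) (A1 A2 : Set S)
    (h1 : ∀ t ∈ A1, t ∉ B) (h2 : ∀ t ∈ A2, t ∉ B) (hd : Disjoint A1 A2) (s : S) :
    untilProb P B (A1 ∪ A2) s = untilProb P B A1 s + untilProb P B A2 s := by
  rw [untilProb_eq_sum P B hP A1 h1 s, untilProb_eq_sum P B hP A2 h2 s,
      untilProb_eq_sum P B hP (A1 ∪ A2) (fun t ht => ht.elim (h1 t) (h2 t)) s]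
  have he : (Set.toFinite (A1 ∪ A2)).toFinset
      = (Set.toFinite A1).toFinset ∪ (Set.toFinite A2).toFinset := by
    ext t
    simp only [Set.Finite.mem_toFinset, Finset.mem_union]
    exact Iff.rfl
  rw [he, Finset.sum_union (by
    rw [Finset.disjoint_left]
    intro t ht1 ht2
    simp only [Set.Finite.mem_toFinset] at ht1 ht2
    exact Set.disjoint_left.mp hd ht1 ht2)]

end Basic

section MR
variable {S : Type*} [Fintype S] [Inhabited S] (P : S → S → ℝ) (ε : ℝ) (sd : Setoid S)

lemma class_eq {s t : S} (h : sd.r s t) : {v | sd.r s v} = {v | sd.r t v} :=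
  Set.ext fun v => ⟨fun h' => sd.trans (sd.symm h) h', fun h' => sd.trans h h'⟩

lemma divClass_congr {s t : S} (h : sd.r s t) :
    divClass P ε sd s ↔ divClass P ε sd t := by
  unfold divClass
  constructor
  · intro hd u hu
    rw [← class_eq sd h]
    exact hd u (sd.trans h hu)
  · intro hd u hu
    rw [class_eq sd h]
    exact hd u (sd.trans (sd.symm h) hu)

lemma pmass_eq_sum {T : Type*} [Fintype T] (μ : T → ℝ) (A : Set T) :
    pmass μ A = ∑ x, if x ∈ A then μ x else 0 := by
  unfold pmass
  rw [tsum_subtype A μ, tsum_fintype]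
  exact Finset.sum_congr rfl (fun x _ => by rw [Set.indicator_apply])

lemma pmass_MRtrans_inl (hP : ∀ s, IsDistr (P s)) (s : S) (A : Set (S ⊕ Quotient sd)) :
    pmass (MRtrans P ε sd (Sum.inl s)) A =
      untilProb P {v | sd.r s v} {t | Sum.inl t ∈ A ∧ ¬ sd.r s t} s +
      (if divClass P ε sd s ∧ Sum.inr (Quotient.mk sd s) ∈ A
        then boxProb P {v | sd.r s v} s else 0) := by
  haveI : Fintype (Quotient sd) := Quotient.fintype sd
  rw [pmass_eq_sum, Fintype.sum_sum_type]
  congr 1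
  · have h1 : ∀ t : S,
        (if Sum.inl t ∈ A then MRtrans P ε sd (Sum.inl s) (Sum.inl t) else 0)
        = if t ∈ {t | Sum.inl t ∈ A ∧ ¬ sd.r s t}
            then untilProb P {v | sd.r s v} {t} s else 0 := by
      intro t
      by_cases ha : Sum.inl t ∈ A <;> by_cases hr : sd.r s t <;>
        simp [MRtrans, ha, hr]
    rw [Finset.sum_congr rfl (fun t _ => h1 t),
        untilProb_eq_sum P {v | sd.r s v} hP {t | Sum.inl t ∈ A ∧ ¬ sd.r s t}
          (fun t ht => ht.2) s,
        ← Finset.sum_filter]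
    apply Finset.sum_congr _ (fun _ _ => rfl)
    ext t
    simp [Set.Finite.mem_toFinset]
  · have h2 : ∀ q : Quotient sd,
        (if Sum.inr q ∈ A then MRtrans P ε sd (Sum.inl s) (Sum.inr q) else 0)
        = if q = Quotient.mk sd s
            then (if divClass P ε sd s ∧ Sum.inr (Quotient.mk sd s) ∈ A
              then boxProb P {v | sd.r s v} s else 0) else 0 := by
      intro q
      by_cases hq : q = Quotient.mk sd s
      · rw [hq]
        by_cases hd : divClass P ε sd s <;>
          by_cases ha : Sum.inr (Quotient.mk sd s) ∈ A <;>
          simp [MRtrans, hd, ha]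
      · simp [MRtrans, hq]
    rw [Finset.sum_congr rfl (fun q _ => h2 q),
        Finset.sum_ite_eq' Finset.univ (Quotient.mk sd s), if_pos (Finset.mem_univ _)]

lemma pmass_MRtrans_inr (q : Quotient sd) (A : Set (S ⊕ Quotient sd)) :
    pmass (MRtrans P ε sd (Sum.inr q)) A = if Sum.inr q ∈ A then 1 else 0 := by
  haveI : Fintype (Quotient sd) := Quotient.fintype sd
  rw [pmass_eq_sum, Fintype.sum_sum_type]
  have h1 : ∀ t : S, (if Sum.inl t ∈ A then MRtrans P ε sd (Sum.inr q) (Sum.inl t) else 0) = 0 := by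
    intro t; simp [MRtrans]
  have h2 : ∀ q' : Quotient sd,
      (if Sum.inr q' ∈ A then MRtrans P ε sd (Sum.inr q) (Sum.inr q') else 0)
      = if q' = q then (if Sum.inr q ∈ A then 1 else 0) else 0 := by
    intro q'
    by_cases hq : q' = q
    · subst hq; by_cases ha : Sum.inr q' ∈ A <;> simp [MRtrans, ha]
    · have : ¬ q = q' := fun h => hq h.symm
      simp [MRtrans, hq, this]
  rw [Finset.sum_congr rfl (fun t _ => h1 t), Finset.sum_const_zero, zero_add,
      Finset.sum_congr rfl (fun q' _ => h2 q'),
      Finset.sum_ite_eq' Finset.univ q, if_pos (Finset.mem_univ _)]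

lemma Rb_equivalence : Equivalence (Rb P ε sd) where
  refl x := by
    cases x with
    | inl s => exact sd.refl s
    | inr q => exact rfl
  symm {x y} h := by
    cases x <;> cases y <;> simp only [Rb] at h ⊢
    · exact sd.symm h
    · exact h
    · exact h
    · exact h.symm
  trans {x y z} h1 h2 := by
    cases x <;> cases y <;> cases z <;> simp only [Rb] at h1 h2 ⊢
    · exact sd.trans h1 h2
    · exact ⟨h2.1.trans (Quotient.sound (s := sd) h1).symm,
        (divClass_congr P ε sd h1).mpr h2.2⟩
    · exact Quotient.exact (s := sd) (h1.1.symm.trans h2.1)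
    · exact ⟨h2 ▸ h1.1, h1.2⟩
    · exact ⟨h1.1.trans (Quotient.sound (s := sd) h2), (divClass_congr P ε sd h2).mp h1.2⟩
    · exact h1.1.trans h2.1.symm
    · exact ⟨h1.trans h2.1, h2.2⟩
    · exact h1.trans h2

end MR

section Key
variable {S : Type*} [Fintype S] [Inhabited S] (P : S → S → ℝ) (ε : ℝ) (sd : Setoid S)

lemma key_inl_inr (hP : ∀ s, IsDistr (P s)) (hε0 : 0 ≤ ε) (s : S)
    (hdiv : divClass P ε sd s) (A : Set (S ⊕ Quotient sd)) :
    |pmass (MRtrans P ε sd (Sum.inl s)) A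
      - pmass (MRtrans P ε sd (Sum.inr (Quotient.mk sd s))) A| ≤ ε := by
  rw [pmass_MRtrans_inl P ε sd hP s A, pmass_MRtrans_inr P ε sd _ A]
  have hX0 : 0 ≤ untilProb P {v | sd.r s v} {t | Sum.inl t ∈ A ∧ ¬ sd.r s t} s :=
    untilProb_nonneg _ _ _ hP s
  have hXU : untilProb P {v | sd.r s v} {t | Sum.inl t ∈ A ∧ ¬ sd.r s t} s
      ≤ untilProb P {v | sd.r s v} {v | sd.r s v}ᶜ s :=
    untilProb_mono P _ hP _ _ (fun u hu => hu.2) (fun u hu => hu) s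
  have hbox : 1 - ε ≤ boxProb P {v | sd.r s v} s := hdiv s (sd.refl s)
  have hboxdef : boxProb P {v | sd.r s v} s
      = 1 - untilProb P {v | sd.r s v} {v | sd.r s v}ᶜ s := rfl
  by_cases ha : Sum.inr (Quotient.mk sd s) ∈ A
  · rw [if_pos ⟨hdiv, ha⟩, if_pos ha, abs_le]
    constructor <;> linarith
  · rw [if_neg (fun h => ha h.2), if_neg ha, add_zero, sub_zero, abs_of_nonneg hX0]
    linarith

lemma key_inl (hP : ∀ s, IsDistr (P s)) (s t : S) (hst : sd.r s t)
    (hbr : ∀ s t, sd.r s t → ∀ B : Set S, relImg sd.r B ⊆ B →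
      |untilProb P {u | sd.r s u} B s - untilProb P {u | sd.r t u} B t| ≤ ε)
    (A : Set (S ⊕ Quotient sd)) (hA : relImg (Rb P ε sd) A ⊆ A) :
    |pmass (MRtrans P ε sd (Sum.inl s)) A - pmass (MRtrans P ε sd (Sum.inl t)) A| ≤ ε := by
  rw [pmass_MRtrans_inl P ε sd hP s A, pmass_MRtrans_inl P ε sd hP t A]
  have hceq : {v | sd.r t v} = {v | sd.r s v} := (class_eq sd hst).symm
  have hBeq : {u | Sum.inl u ∈ A ∧ ¬ sd.r t u} = {u | Sum.inl u ∈ A ∧ ¬ sd.r s u} := by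
    ext u
    exact ⟨fun h => ⟨h.1, fun hr => h.2 (sd.trans (sd.symm hst) hr)⟩,
           fun h => ⟨h.1, fun hr => h.2 (sd.trans hst hr)⟩⟩
  have hqeq : Quotient.mk sd t = Quotient.mk sd s := (Quotient.sound (s := sd) hst).symm
  rw [hceq, hBeq, hqeq, ← divClass_congr P ε sd hst]
  have hBcl : relImg sd.r {u | Sum.inl u ∈ A ∧ ¬ sd.r s u}
      ⊆ {u | Sum.inl u ∈ A ∧ ¬ sd.r s u} := by
    rintro w ⟨u, hu, huw⟩
    exact ⟨hA ⟨Sum.inl u, hu.1, huw⟩, fun hr => hu.2 (sd.trans hr (sd.symm huw))⟩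
  by_cases hd : divClass P ε sd s ∧ Sum.inr (Quotient.mk sd s) ∈ A
  · rw [if_pos hd, if_pos hd]
    have hBsubC : {u | Sum.inl u ∈ A ∧ ¬ sd.r s u} ⊆ {v | sd.r s v}ᶜ := fun u hu => hu.2
    have hdecomp : ∀ u : S, untilProb P {v | sd.r s v} {v | sd.r s v}ᶜ u
        = untilProb P {v | sd.r s v} {u | Sum.inl u ∈ A ∧ ¬ sd.r s u} u
          + untilProb P {v | sd.r s v}
              ({v | sd.r s v}ᶜ \ {u | Sum.inl u ∈ A ∧ ¬ sd.r s u}) u := by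
      intro u
      conv_lhs => rw [← Set.union_diff_cancel hBsubC]
      exact untilProb_union P _ hP _ _ (fun x hx => hx.2) (fun x hx => hx.1)
        disjoint_sdiff_self_right u
    have hB'cl : relImg sd.r ({v | sd.r s v}ᶜ \ {u | Sum.inl u ∈ A ∧ ¬ sd.r s u})
        ⊆ ({v | sd.r s v}ᶜ \ {u | Sum.inl u ∈ A ∧ ¬ sd.r s u}) := by
      rintro w ⟨u, ⟨hu1, hu2⟩, huw⟩
      constructor
      · intro hw
        exact hu1 (sd.trans hw (sd.symm huw))
      · intro hw
        exact hu2 (hBcl ⟨w, hw, sd.symm huw⟩)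
    have h := hbr s t hst ({v | sd.r s v}ᶜ \ {u | Sum.inl u ∈ A ∧ ¬ sd.r s u}) hB'cl
    rw [hceq] at h
    unfold boxProb
    rw [hdecomp s, hdecomp t]
    have harith : ∀ a b c d : ℝ, a + (1 - (a + b)) - (c + (1 - (c + d))) = d - b := by
      intros; ring
    rw [harith, abs_sub_comm]
    exact h
  · rw [if_neg hd, if_neg hd, add_zero, add_zero]
    have h := hbr s t hst {u | Sum.inl u ∈ A ∧ ¬ sd.r s u} hBcl
    rw [hceq] at h
    exact h

lemma key_backward (hP : ∀ s, IsDistr (P s)) (hε0 : 0 ≤ ε)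
    (htr : ∀ u v, Rb P ε sd u v → ∀ A : Set (S ⊕ Quotient sd),
      relImg (Rb P ε sd) A ⊆ A →
      |pmass (MRtrans P ε sd u) A - pmass (MRtrans P ε sd v) A| ≤ ε)
    (s t : S) (hst : sd.r s t) (A : Set S) (hA : relImg sd.r A ⊆ A) :
    |untilProb P {u | sd.r s u} A s - untilProb P {u | sd.r t u} A t| ≤ ε := by
  by_cases hsA : s ∈ A
  · have htA : t ∈ A := hA ⟨s, hsA, hst⟩
    rw [untilProb_of_mem P _ A s hsA, untilProb_of_mem P _ A t htA, sub_self, abs_zero]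
    exact hε0
  · have hnc : ∀ u ∈ A, ¬ sd.r s u := fun u hu hr => hsA (hA ⟨u, hu, sd.symm hr⟩)
    have hnct : ∀ u ∈ A, ¬ sd.r t u := fun u hu hr => hnc u hu (sd.trans hst hr)
    set A' : Set (S ⊕ Quotient sd) :=
      {x | Sum.elim (fun u => u ∈ A)
        (fun q => ∃ u, u ∈ A ∧ divClass P ε sd u ∧ q = Quotient.mk sd u) x} with hA'def
    have hA'cl : relImg (Rb P ε sd) A' ⊆ A' := by
      rintro x ⟨y, hy, hxy⟩
      cases y with
      | inl u =>
        cases x with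
        | inl v => exact hA ⟨u, hy, hxy⟩
        | inr q => exact ⟨u, hy, hxy.2, hxy.1⟩
      | inr q =>
        obtain ⟨u, hu, hdu, hqu⟩ := hy
        cases x with
        | inl v => exact hA ⟨u, hu, Quotient.exact (s := sd) (hqu.symm.trans hxy.1)⟩
        | inr q' => exact ⟨u, hu, hdu, hxy.symm.trans hqu⟩
    have h := htr (Sum.inl s) (Sum.inl t) hst A' hA'cl
    rw [pmass_MRtrans_inl P ε sd hP s A', pmass_MRtrans_inl P ε sd hP t A'] at h
    have hBs : {u | Sum.inl u ∈ A' ∧ ¬ sd.r s u} = A := by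
      ext u; exact ⟨fun h => h.1, fun h => ⟨h, hnc u h⟩⟩
    have hBt : {u | Sum.inl u ∈ A' ∧ ¬ sd.r t u} = A := by
      ext u; exact ⟨fun h => h.1, fun h => ⟨h, hnct u h⟩⟩
    have hds : ¬ (divClass P ε sd s ∧ Sum.inr (Quotient.mk sd s) ∈ A') := by
      rintro ⟨-, ⟨u, hu, -, hqu⟩⟩
      exact hnc u hu (Quotient.exact (s := sd) hqu)
    have hdt : ¬ (divClass P ε sd t ∧ Sum.inr (Quotient.mk sd t) ∈ A') := by
      rintro ⟨-, ⟨u, hu, -, hqu⟩⟩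
      exact hnct u hu (Quotient.exact (s := sd) hqu)
    rw [hBs, hBt, if_neg hds, if_neg hdt, add_zero, add_zero] at h
    exact h

end Key

theorem branching_iff_trans_on_MR {S L : Type*} [Fintype S] [Nonempty S]
    (P : S → S → ℝ) (lab : S → L)
    (hP : ∀ s, IsDistr (P s)) (ε : ℝ) (hε0 : 0 ≤ ε) (hε1 : ε ≤ 1)
    (sd : Setoid S) (hlab : ∀ s t, sd.r s t → lab s = lab t) :
    IsBranchingEpsBisim P lab ε sd.r ↔
      IsTransEpsBisim (MRtrans P ε sd) (MRlab lab sd) ε (Rb P ε sd) := by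
  haveI : Inhabited S := Classical.inhabited_of_nonempty ‹Nonempty S›
  constructor
  · rintro ⟨-, hbr'⟩
    have hbr : ∀ s t, sd.r s t → ∀ B : Set S, relImg sd.r B ⊆ B →
        |untilProb P {u | sd.r s u} B s - untilProb P {u | sd.r t u} B t| ≤ ε :=
      fun s t h B hB => (hbr' s t h).2 B hB
    refine ⟨Rb_equivalence P ε sd, ?_⟩
    intro u v huv
    constructor
    · cases u with
      | inl s =>
        cases v with
        | inl t => exact hlab s t huv
        | inr q =>
          obtain ⟨hq, -⟩ := huv
          subst hq
          show lab s = lab _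
          exact hlab _ _ (sd.symm (Quotient.exact (s := sd) (Quotient.out_eq _)))
      | inr q =>
        cases v with
        | inl t =>
          obtain ⟨hq, -⟩ := huv
          subst hq
          show lab _ = lab t
          exact hlab _ _ (Quotient.exact (s := sd) (Quotient.out_eq _))
        | inr q' =>
          show lab q.out = lab q'.out
          rw [huv]
    · intro A hAcl
      cases u with
      | inl s =>
        cases v with
        | inl t => exact key_inl P ε sd hP s t huv hbr A hAcl
        | inr q =>
          obtain ⟨hq, hd⟩ := huv
          subst hq
          exact key_inl_inr P ε sd hP hε0 s hd A
      | inr q =>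
        cases v with
        | inl t =>
          obtain ⟨hq, hd⟩ := huv
          subst hq
          rw [abs_sub_comm]
          exact key_inl_inr P ε sd hP hε0 t hd A
        | inr q' =>
          have hq : q = q' := huv
          rw [hq, sub_self, abs_zero]
          exact hε0
  · rintro ⟨-, htr'⟩
    have htr : ∀ u v, Rb P ε sd u v → ∀ A : Set (S ⊕ Quotient sd),
        relImg (Rb P ε sd) A ⊆ A →
        |pmass (MRtrans P ε sd u) A - pmass (MRtrans P ε sd v) A| ≤ ε :=
      fun u v h A hA => (htr' u v h).2 A hA
    exact ⟨sd.iseqv, fun s t hst => ⟨hlab s t hst,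
      fun A hA => key_backward P ε sd hP hε0 htr s t hst A hA⟩⟩
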